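/- Let N \ge 3, let z_1 > ... > z_N be the zeros of H_N, and let S_N be the matrix with s_{ii} = 1 + \sum_{l \ne i}(z_i-z_l)^{-2}, s_{ij} = -(z_i-z_j)^{-2} for i \ne j. Then the vector with entries z_i^2 - (N-1)/2 is an eigenvector of S_N with eigenvalue 3. -/

import Mathlib

open Polynomial Finset Matrix

/-- The physicists' Hermite polynomials, orthogonal w.r.t. the weight `e^{-x^2}`. -/
noncomputable def physHermite : ℕ → Polynomial ℝ
  | 0 => 1
  | 1 => 2 * X
  | n + 2 => 2 * X * physHermite (n + 1) - C (2 * ((n : ℝ) + 1)) * physHermite n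

lemma two_eq_C : (2 : ℝ[X]) = C 2 := (map_ofNat C 2).symm

lemma ph_deg_aux : ∀ n : ℕ, ((physHermite n).natDegree ≤ n ∧ (physHermite n).coeff n = 2 ^ n)
    ∧ ((physHermite (n+1)).natDegree ≤ n+1 ∧ (physHermite (n+1)).coeff (n+1) = 2 ^ (n+1)) := by
  intro n
  induction n with
  | zero =>
    refine ⟨⟨by simp [physHermite], by simp [physHermite]⟩, ?_, ?_⟩
    · show (physHermite 1).natDegree ≤ 1
      rw [physHermite, two_eq_C]
      exact (natDegree_C_mul_le 2 X).trans (by simp)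
    · show (physHermite 1).coeff 1 = 2 ^ 1
      rw [physHermite, two_eq_C, coeff_C_mul, coeff_X_one]; norm_num
  | succ n ih =>
    obtain ⟨h1, h2⟩ := ih
    refine ⟨h2, ?_, ?_⟩
    · show (physHermite (n+2)).natDegree ≤ n + 2
      rw [physHermite]
      refine (natDegree_sub_le _ _).trans ?_
      simp only [max_le_iff]
      constructor
      · calc (2 * X * physHermite (n+1)).natDegree
            ≤ (2*X : ℝ[X]).natDegree + (physHermite (n+1)).natDegree := natDegree_mul_le
          _ ≤ 1 + (n+1) := by
              gcongr
              · rw [two_eq_C]; exact (natDegree_C_mul_le 2 X).trans (by simp)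
              · exact h2.1
          _ = n + 2 := by ring
      · calc (C (2 * ((n:ℝ)+1)) * physHermite n).natDegree
            ≤ (physHermite n).natDegree := natDegree_C_mul_le _ _
          _ ≤ n + 2 := h1.1.trans (by omega)
    · show (physHermite (n+2)).coeff (n+2) = 2 ^ (n+2)
      rw [physHermite, coeff_sub, coeff_C_mul, mul_assoc, two_eq_C, coeff_C_mul,
        coeff_X_mul, h2.2, coeff_eq_zero_of_natDegree_lt (lt_of_le_of_lt h1.1 (by omega))]
      ring

def DP (n : ℕ) : Prop := derivative (physHermite (n+1)) = C (2*((n:ℝ)+1)) * physHermite n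

lemma hP1 : physHermite 1 = C 2 * X := by rw [show physHermite 1 = 2*X from rfl, two_eq_C]

lemma ph_deriv_aux : ∀ n : ℕ, DP n ∧ DP (n+1) := by
  intro n
  induction n with
  | zero =>
    constructor
    · show derivative (physHermite 1) = _
      rw [hP1]
      simp [physHermite]
    · show derivative (physHermite 2) = C (2*(((1:ℕ):ℝ)+1)) * physHermite 1
      have h2 : physHermite 2 = C 2 * X * physHermite 1 - C (2*(((0:ℕ):ℝ)+1)) * physHermite 0 := by
        rw [show physHermite 2 = 2 * X * physHermite 1 - C (2 * (((0:ℕ):ℝ) + 1)) * physHermite 0 from rfl, two_eq_C]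
      rw [h2, hP1, show physHermite 0 = 1 from rfl]
      simp only [derivative_sub, derivative_mul, derivative_C, derivative_X, derivative_one]
      simp only [_root_.map_mul, _root_.map_add, _root_.map_one, map_ofNat, C_eq_natCast]
      push_cast
      ring
  | succ n ih =>
    obtain ⟨ih1, ih2⟩ := ih
    refine ⟨ih2, ?_⟩
    show derivative (physHermite (n+3)) = C (2*((((n+2):ℕ):ℝ)+1)) * physHermite (n+2)
    have hr : physHermite (n+3) = C 2 * X * physHermite (n+2) - C (2*((((n+1):ℕ):ℝ)+1)) * physHermite (n+1) := by
      rw [show physHermite (n+3) = 2 * X * physHermite (n+2) - C (2 * ((((n+1):ℕ):ℝ) + 1)) * physHermite (n+1) from rfl, two_eq_C]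
    have hr2 : physHermite (n+2) = C 2 * X * physHermite (n+1) - C (2*(((n:ℕ):ℝ)+1)) * physHermite n := by
      rw [show physHermite (n+2) = 2 * X * physHermite (n+1) - C (2 * (((n:ℕ):ℝ) + 1)) * physHermite n from rfl, two_eq_C]
    have dih1 : derivative (physHermite (n+1)) = C (2*((n:ℝ)+1)) * physHermite n := ih1
    have dih2 : derivative (physHermite (n+2)) = C (2*((((n+1):ℕ):ℝ)+1)) * physHermite (n+1) := ih2
    rw [hr]
    simp only [derivative_sub, derivative_mul, derivative_C, derivative_X]
    rw [dih2, dih1, hr2]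
    simp only [_root_.map_mul, _root_.map_add, _root_.map_one, map_ofNat, C_eq_natCast]
    push_cast
    ring

lemma ph_deriv (n : ℕ) : derivative (physHermite (n+1)) = C (2*((n:ℝ)+1)) * physHermite n :=
  (ph_deriv_aux n).1

lemma ph_natDegree_le (n : ℕ) : (physHermite n).natDegree ≤ n := (ph_deg_aux n).1.1
lemma ph_coeff (n : ℕ) : (physHermite n).coeff n = 2 ^ n := (ph_deg_aux n).1.2

lemma derivative_finset_prod {ι : Type*} [DecidableEq ι] (s : Finset ι) (f : ι → Polynomial ℝ) :
    derivative (∏ b ∈ s, f b) = ∑ b ∈ s, (∏ a ∈ s.erase b, f a) * derivative (f b) := by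
  induction s using Finset.induction_on with
  | empty => simp
  | @insert a s ha ih =>
    have hterm : ∀ b ∈ s, (∏ x ∈ (insert a s).erase b, f x) * derivative (f b)
        = f a * ((∏ x ∈ s.erase b, f x) * derivative (f b)) := by
      intro b hb
      have hab : a ≠ b := fun h => ha (h ▸ hb)
      rw [Finset.erase_insert_of_ne hab,
        Finset.prod_insert (fun h => ha (Finset.mem_of_mem_erase h)), mul_assoc]
    rw [Finset.prod_insert ha, derivative_mul, ih, Finset.sum_insert ha, Finset.erase_insert ha,
      Finset.sum_congr rfl hterm, ← Finset.mul_sum]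
    ring

lemma electro (N : ℕ) (hN : 2 ≤ N) (z : Fin N → ℝ) (hinj : Function.Injective z)
    (hroot : ∀ i, (physHermite N).eval (z i) = 0) (i : Fin N) :
    z i = ∑ j ∈ Finset.univ.erase i, (z i - z j)⁻¹ := by
  obtain ⟨m, rfl⟩ : ∃ m, N = m + 2 := ⟨N - 2, by omega⟩
  set H := physHermite (m+2) with hHdef
  have hcoeff : H.coeff (m+2) = 2 ^ (m+2) := ph_coeff (m+2)
  have hne : H ≠ 0 := by
    intro h
    rw [h, coeff_zero] at hcoeff
    exact (pow_ne_zero (m+2) (by norm_num : (2:ℝ) ≠ 0)) hcoeff.symm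
  -- factorization
  set P : Polynomial ℝ := ∏ j : Fin (m+2), (X - C (z j)) with hPdef
  have hPdvd : P ∣ H := Fintype.prod_dvd_of_coprime (pairwise_coprime_X_sub_C hinj)
    (fun j => dvd_iff_isRoot.2 (hroot j))
  have hPdeg : P.natDegree = m + 2 := by
    rw [hPdef, natDegree_prod]
    · simp
    · intro j _; exact X_sub_C_ne_zero (z j)
  have hHdeg : H.natDegree = m + 2 :=
    le_antisymm (ph_natDegree_le (m+2)) (hPdeg ▸ natDegree_le_of_dvd hPdvd hne)
  obtain ⟨g, hg⟩ := hPdvd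
  have hgne : g ≠ 0 := fun h => hne (by rw [hg, h, mul_zero])
  have hPne : P ≠ 0 := fun h => hne (by rw [hg, h, zero_mul])
  have hgdeg : g.natDegree = 0 := by
    have := natDegree_mul hPne hgne
    rw [← hg, hHdeg, hPdeg] at this
    omega
  obtain ⟨c, hc⟩ : ∃ c : ℝ, g = C c := ⟨g.coeff 0, eq_C_of_natDegree_eq_zero hgdeg⟩
  have hcne : c ≠ 0 := fun h => hgne (by rw [hc, h, map_zero])
  set Q : Polynomial ℝ := ∏ j ∈ Finset.univ.erase i, (X - C (z j)) with hQdef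
  have hPQ : P = (X - C (z i)) * Q := (Finset.mul_prod_erase _ _ (Finset.mem_univ i)).symm
  have hH : H = (X - C (z i)) * Q * C c := by rw [hg, hc, hPQ]
  -- derivatives evaluated at z i
  have h1 : eval (z i) (derivative H) = c * eval (z i) Q := by
    rw [hH]
    simp only [derivative_mul, derivative_sub, derivative_X, derivative_C]
    simp [eval_mul, eval_add, eval_sub]
    ring
  have h2 : eval (z i) (derivative (derivative H)) = 2 * c * eval (z i) (derivative Q) := by
    rw [hH]
    simp only [derivative_mul, derivative_sub, derivative_X, derivative_C]
    simp [eval_mul, eval_add, eval_sub]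
    ring
  -- ODE at root
  have hd1 : derivative H = C (2*(((m+1):ℕ):ℝ)+2*1) * physHermite (m+1) := by
    have := ph_deriv (m+1); rw [hHdef, this]; push_cast; ring_nf
  have hd2 : derivative (derivative H) = C (2*(((m+1):ℕ):ℝ)+2*1) * (C (2*((m:ℕ):ℝ)+2*1) * physHermite m) := by
    rw [hd1, derivative_mul, derivative_C, ph_deriv m]; push_cast; ring_nf
  have hrec : eval (z i) H = 2 * z i * eval (z i) (physHermite (m+1)) - (2*((m:ℕ):ℝ)+2*1) * eval (z i) (physHermite m) := by
    rw [hHdef, show physHermite (m+2) = 2 * X * physHermite (m+1) - C (2 * (((m:ℕ):ℝ) + 1)) * physHermite m from rfl]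
    simp only [eval_sub, eval_mul, eval_ofNat, eval_X, eval_C]
    push_cast
    ring
  have hODE : eval (z i) (derivative (derivative H)) = 2 * z i * eval (z i) (derivative H) := by
    rw [hd2, hd1]
    have h0 := hroot i
    rw [hrec] at h0
    simp only [eval_mul, eval_C]
    nlinarith [h0]
  -- conclude Q'(z i) = z i * Q(z i)
  have hQeval : eval (z i) Q ≠ 0 := by
    rw [hQdef, eval_prod]
    refine Finset.prod_ne_zero_iff.2 fun j hj => ?_
    have : z i ≠ z j := fun h => (Finset.mem_erase.1 hj).1 (hinj h).symm
    simp only [eval_sub, eval_X, eval_C]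
    exact sub_ne_zero.2 this
  have hkey : eval (z i) (derivative Q) = z i * eval (z i) Q := by
    have h3 := hODE
    rw [h1, h2] at h3
    have h4 : c * (eval (z i) (derivative Q) - z i * eval (z i) Q) = 0 := by
      linear_combination h3 / 2
    rcases mul_eq_zero.1 h4 with h | h
    · exact absurd h hcne
    · linarith
  -- expand Q'
  have hQev : eval (z i) Q = ∏ j ∈ Finset.univ.erase i, (z i - z j) := by
    rw [hQdef, eval_prod]; simp
  have hQ' : eval (z i) (derivative Q) = ∑ k ∈ Finset.univ.erase i, ((z i - z k)⁻¹ * eval (z i) Q) := by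
    rw [hQdef, derivative_finset_prod, eval_finset_sum]
    refine Finset.sum_congr rfl fun k hk => ?_
    have hzk : z i - z k ≠ 0 := by
      have : z i ≠ z k := fun h => (Finset.mem_erase.1 hk).1 (hinj h).symm
      exact sub_ne_zero.2 this
    rw [eval_mul, derivative_X_sub_C, eval_one, mul_one, eval_prod]
    simp only [eval_sub, eval_X, eval_C]
    rw [hQev, ← Finset.mul_prod_erase _ _ hk, inv_mul_cancel_left₀ hzk]
  rw [hQ', ← Finset.sum_mul] at hkey
  exact (mul_right_cancel₀ hQeval hkey).symm

theorem stmt_7 (N : ℕ) (hN : 3 ≤ N) (z : Fin N → ℝ)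
    (hord : ∀ i j : Fin N, i < j → z j < z i)
    (hroot : ∀ i, (physHermite N).eval (z i) = 0)
    (S : Matrix (Fin N) (Fin N) ℝ)
    (hS : ∀ i j, S i j = if i = j
      then 1 + ∑ l ∈ Finset.univ.erase i, ((z i - z l) ^ 2)⁻¹
      else -((z i - z j) ^ 2)⁻¹)
    (v : Fin N → ℝ) (hv : ∀ i, v i = (z i) ^ 2 - ((N : ℝ) - 1) / 2) :
    S.mulVec v = (3 : ℝ) • v ∧ v ≠ 0 := by
  have hinj : Function.Injective z := by
    intro a b hab
    by_contra h
    rcases lt_or_gt_of_ne h with hlt | hlt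
    · exact (hord a b hlt).ne hab.symm
    · exact (hord b a hlt).ne hab
  constructor
  · funext i
    have he := electro N (by omega) z hinj hroot i
    have hcard : ((Finset.univ.erase i).card : ℝ) = (N : ℝ) - 1 := by
      rw [Finset.card_erase_of_mem (Finset.mem_univ i), Finset.card_univ, Fintype.card_fin]
      have : 1 ≤ N := by omega
      push_cast [Nat.cast_sub this]
      ring
    have hterm : ∀ j ∈ Finset.univ.erase i, S i j * v j
        = -(((z i - z j)^2)⁻¹ * v i) + (2 * z i * (z i - z j)⁻¹ - 1) := by
      intro j hj
      have hij : i ≠ j := ((Finset.mem_erase.1 hj).1).symm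
      have hd : z i - z j ≠ 0 := sub_ne_zero.2 fun h => hij (hinj h)
      rw [hS, if_neg hij, hv j, hv i]
      field_simp
      ring
    show ∑ j, S i j * v j = ((3:ℝ) • v) i
    rw [← Finset.add_sum_erase _ _ (Finset.mem_univ i), Finset.sum_congr rfl hterm]
    rw [Finset.sum_add_distrib, Finset.sum_sub_distrib, Finset.sum_neg_distrib,
      ← Finset.sum_mul, ← Finset.mul_sum, ← he, Finset.sum_const, nsmul_eq_mul, hcard,
      hS, if_pos rfl, hv i]
    simp only [Pi.smul_apply, smul_eq_mul, hv i]
    ring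
  · intro h0
    have hz : ∀ i : Fin N, z i ^ 2 = ((N:ℝ) - 1) / 2 := by
      intro i
      have := congrFun h0 i
      rw [hv i] at this
      simp at this
      linarith [this]
    set i0 : Fin N := ⟨0, by omega⟩
    set i1 : Fin N := ⟨1, by omega⟩
    set i2 : Fin N := ⟨2, by omega⟩
    have h01 : z i1 < z i0 := hord i0 i1 (Fin.lt_def.2 (show (0:ℕ) < 1 by norm_num))
    have h12 : z i2 < z i1 := hord i1 i2 (Fin.lt_def.2 (show (1:ℕ) < 2 by norm_num))
    have hab : z i0 + z i1 = 0 := by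
      have hm : (z i0 - z i1) * (z i0 + z i1) = 0 := by
        linear_combination hz i0 - hz i1
      rcases mul_eq_zero.1 hm with h | h
      · linarith
      · exact h
    have hbc : z i1 + z i2 = 0 := by
      have hm : (z i1 - z i2) * (z i1 + z i2) = 0 := by
        linear_combination hz i1 - hz i2
      rcases mul_eq_zero.1 hm with h | h
      · linarith
      · exact h
    linarith
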